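/- Let p be an odd prime and γ ≥ 1. Let (a_i, b_i), for i in a finite index set I with |I| ≥ p^γ + p^{γ-1} - 1, be pairs of integers, all lying (mod p) on the same line L_ν = {c·e_ν : c ∈ (ℤ/pℤ)*} with no pair ≡ (0,0) mod p. Then there exists a nonempty subset K ⊆ I such that ∑_{i∈K} a_i ≡ ∑_{i∈K} b_i ≡ 0 (mod p^γ). -/

import Mathlib

open Finset

/-- Olson's theorem (Davenport constant bound) for `ℤ/p^γ × ℤ/p^δ`. -/
lemma davenport_aux (p γ δ : ℕ) (hp : p.Prime) {n : ℕ}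
    (hn : p ^ γ + p ^ δ - 1 ≤ n) (x y : Fin n → ℤ) :
    ∃ K : Finset (Fin n), K.Nonempty ∧
      (p : ℤ) ^ γ ∣ ∑ i ∈ K, x i ∧ (p : ℤ) ^ δ ∣ ∑ i ∈ K, y i := by
  haveI : Fact p.Prime := ⟨hp⟩
  by_contra hcon
  push_neg at hcon
  have hq0 : p ^ γ ≠ 0 := pow_ne_zero _ hp.pos.ne'
  have hr0 : p ^ δ ≠ 0 := pow_ne_zero _ hp.pos.ne'
  haveI : NeZero (p ^ γ) := ⟨hq0⟩
  haveI : NeZero (p ^ δ) := ⟨hr0⟩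
  set G := ZMod (p ^ γ) × ZMod (p ^ δ) with hG
  set R := AddMonoidAlgebra (ZMod p) G with hR
  have hinj : Function.Injective (AddMonoidAlgebra.singleZeroRingHom (R := ZMod p) (M := G)) := by
    intro u v h
    simpa using AddMonoidAlgebra.single_right_injective (m := (0 : G)) h
  haveI : CharP R p := charP_of_injective_ringHom hinj p
  set A : R := AddMonoidAlgebra.single ((1 : ZMod (p ^ γ)), (0 : ZMod (p ^ δ))) (1 : ZMod p) with hA
  set B : R := AddMonoidAlgebra.single ((0 : ZMod (p ^ γ)), (1 : ZMod (p ^ δ))) (1 : ZMod p) with hB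
  have hApow : ∀ m : ℕ, A ^ m =
      AddMonoidAlgebra.single (((m : ZMod (p ^ γ)), (0 : ZMod (p ^ δ))) : G) 1 := by
    intro m
    rw [hA, AddMonoidAlgebra.single_pow, one_pow]
    congr 1
    rw [show m • (((1 : ZMod (p ^ γ)), (0 : ZMod (p ^ δ))) : G)
      = ((m • (1 : ZMod (p ^ γ)), m • (0 : ZMod (p ^ δ))) : G) from rfl]
    simp [nsmul_eq_mul]
  have hBpow : ∀ m : ℕ, B ^ m =
      AddMonoidAlgebra.single (((0 : ZMod (p ^ γ)), (m : ZMod (p ^ δ))) : G) 1 := by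
    intro m
    rw [hB, AddMonoidAlgebra.single_pow, one_pow]
    congr 1
    rw [show m • (((0 : ZMod (p ^ γ)), (1 : ZMod (p ^ δ))) : G)
      = ((m • (0 : ZMod (p ^ γ)), m • (1 : ZMod (p ^ δ))) : G) from rfl]
    simp [nsmul_eq_mul]
  have hone : (1 : R) = AddMonoidAlgebra.single (0 : G) 1 := AddMonoidAlgebra.one_def
  have ha : (A - 1) ^ p ^ γ = 0 := by
    rw [sub_pow_char_pow, hApow, one_pow]
    rw [show (((p ^ γ : ℕ) : ZMod (p ^ γ)), (0 : ZMod (p ^ δ))) = (0 : G) by simp]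
    rw [← hone, sub_self]
  have hb : (B - 1) ^ p ^ δ = 0 := by
    rw [sub_pow_char_pow, hBpow, one_pow]
    rw [show (((0 : ZMod (p ^ γ)), ((p ^ δ : ℕ) : ZMod (p ^ δ)))) = (0 : G) by simp]
    rw [← hone, sub_self]
  have key : ∀ g : G, ∃ s t : R,
      AddMonoidAlgebra.single g 1 - 1 = (A - 1) * s + (B - 1) * t := by
    rintro ⟨u, v⟩
    obtain ⟨m, rfl⟩ := ZMod.natCast_zmod_surjective u
    obtain ⟨l, rfl⟩ := ZMod.natCast_zmod_surjective v
    refine ⟨∑ i ∈ Finset.range m, A ^ i, A ^ m * ∑ i ∈ Finset.range l, B ^ i, ?_⟩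
    have hmul : A ^ m * B ^ l =
        AddMonoidAlgebra.single ((((m : ℕ) : ZMod (p ^ γ)), ((l : ℕ) : ZMod (p ^ δ))) : G) 1 := by
      rw [hApow, hBpow, AddMonoidAlgebra.single_mul_single]
      simp
    have g1 : (∑ i ∈ Finset.range m, A ^ i) * (A - 1) = A ^ m - 1 := geom_sum_mul A m
    have g2 : (∑ i ∈ Finset.range l, B ^ i) * (B - 1) = B ^ l - 1 := geom_sum_mul B l
    rw [← hmul]
    linear_combination -g1 - A ^ m * g2
  set g : Fin n → G := fun i => (((x i : ℤ) : ZMod (p ^ γ)), ((y i : ℤ) : ZMod (p ^ δ))) with hg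
  choose s t hst using fun i => key (g i)
  set P : R := ∏ i : Fin n, (AddMonoidAlgebra.single (g i) (1 : ZMod p) - 1) with hP
  have hP0 : P = 0 := by
    rw [hP]
    calc ∏ i : Fin n, (AddMonoidAlgebra.single (g i) (1 : ZMod p) - 1)
        = ∏ i : Fin n, ((A - 1) * s i + (B - 1) * t i) :=
          Finset.prod_congr rfl fun i _ => hst i
      _ = ∑ T ∈ (univ : Finset (Fin n)).powerset,
            (∏ i ∈ T, (A - 1) * s i) * ∏ i ∈ univ \ T, (B - 1) * t i :=
          Finset.prod_add _ _ _
      _ = 0 := by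
          refine Finset.sum_eq_zero fun T hT => ?_
          rw [Finset.prod_mul_distrib, Finset.prod_mul_distrib, Finset.prod_const,
            Finset.prod_const]
          have hcard : (univ \ T).card = n - T.card := by
            rw [Finset.card_sdiff_of_subset (Finset.mem_powerset.mp hT), Finset.card_univ, Fintype.card_fin]
          rcases le_or_gt (p ^ γ) T.card with h | h
          · obtain ⟨d, hd⟩ := Nat.exists_eq_add_of_le h
            rw [hd, pow_add, ha, zero_mul]
            ring
          · have hrle : p ^ δ ≤ (univ \ T).card := by
              have hTle : T.card ≤ n := by
                simpa using Finset.card_le_card (Finset.mem_powerset.mp hT)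
              omega
            obtain ⟨d, hd⟩ := Nat.exists_eq_add_of_le hrle
            rw [hd, pow_add, hb, zero_mul]
            ring
  have hexp : P = ∑ K ∈ (univ : Finset (Fin n)).powerset,
      AddMonoidAlgebra.single (∑ i ∈ K, g i) ((-1 : ZMod p) ^ (n - K.card)) := by
    rw [hP]
    have hneg : ∀ i : Fin n, AddMonoidAlgebra.single (g i) (1 : ZMod p) - 1
        = AddMonoidAlgebra.single (g i) (1 : ZMod p) + (-1) := by
      intro i; ring
    rw [Finset.prod_congr rfl fun i _ => hneg i,
      Finset.prod_add (fun i => AddMonoidAlgebra.single (g i) (1 : ZMod p)) (fun _ => (-1 : R))]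
    refine Finset.sum_congr rfl fun K hK => ?_
    rw [AddMonoidAlgebra.prod_single, Finset.prod_const_one, Finset.prod_const]
    have hcard : (univ \ K).card = n - K.card := by
      rw [Finset.card_sdiff_of_subset (Finset.mem_powerset.mp hK), Finset.card_univ, Fintype.card_fin]
    have hmone : (-1 : R) = AddMonoidAlgebra.single (0 : G) (-1 : ZMod p) := by
      rw [show AddMonoidAlgebra.single (0 : G) (-1 : ZMod p)
        = -AddMonoidAlgebra.single (0 : G) (1 : ZMod p) by
          simp [Finsupp.single_neg], ← hone]
    rw [hcard, hmone, AddMonoidAlgebra.single_pow, smul_zero,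
      AddMonoidAlgebra.single_mul_single, add_zero, one_mul]
  have hphi : ∀ (gg : G) (c : ZMod p),
      ((Finsupp.applyAddHom (0 : G)).comp AddMonoidAlgebra.coeffAddEquiv.toAddMonoidHom : R →+ ZMod p)
        (AddMonoidAlgebra.single gg c) = if gg = 0 then c else 0 := by
    intro gg c
    classical
    show Finsupp.single gg c 0 = _
    simp [Finsupp.single_apply]
  have hsum0 : ∑ K ∈ (univ : Finset (Fin n)).powerset,
      (if (∑ i ∈ K, g i) = 0 then ((-1 : ZMod p) ^ (n - K.card)) else 0) = 0 := by
    have := congrArg ((Finsupp.applyAddHom (0 : G)).comp AddMonoidAlgebra.coeffAddEquiv.toAddMonoidHom : R →+ ZMod p)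
      (hexp.symm.trans hP0)
    rw [map_sum, map_zero] at this
    exact (Finset.sum_congr rfl fun K _ => (hphi _ _).symm).trans this
  have hne : ∀ K ∈ (univ : Finset (Fin n)).powerset, K ≠ ∅ →
      (if (∑ i ∈ K, g i) = 0 then ((-1 : ZMod p) ^ (n - K.card)) else 0) = 0 := by
    intro K _ hKne
    rw [if_neg]
    intro h0
    have hKnonempty : K.Nonempty := Finset.nonempty_of_ne_empty hKne
    have h1 : ((∑ i ∈ K, x i : ℤ) : ZMod (p ^ γ)) = 0 := by
      have h0' := congrArg Prod.fst h0
      rw [Prod.fst_sum] at h0'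
      push_cast
      simpa [hg] using h0'
    have h2 : ((∑ i ∈ K, y i : ℤ) : ZMod (p ^ δ)) = 0 := by
      have h0' := congrArg Prod.snd h0
      rw [Prod.snd_sum] at h0'
      push_cast
      simpa [hg] using h0'
    rw [ZMod.intCast_zmod_eq_zero_iff_dvd] at h1 h2
    push_cast at h1 h2
    exact (hcon K hKnonempty h1) h2
  have hempty := Finset.sum_eq_single_of_mem (f := fun K : Finset (Fin n) =>
      (if (∑ i ∈ K, g i) = 0 then ((-1 : ZMod p) ^ (n - K.card)) else 0))
      (∅ : Finset (Fin n)) (Finset.empty_mem_powerset _) hne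
  rw [hsum0] at hempty
  simp only [Finset.sum_empty, Finset.card_empty, Nat.sub_zero, if_pos rfl] at hempty
  exact pow_ne_zero n (neg_ne_zero.mpr (one_ne_zero : (1 : ZMod p) ≠ 0)) hempty.symm


/-- The vector `e_ν` of the paper: `e_0 = (1,0)` and `e_ν = (ν,1)` for `ν ≥ 1`. -/
def eLow (ν : ℕ) : ℤ × ℤ := if ν = 0 then (1, 0) else ((ν : ℤ), 1)

/-- `(a, b)` is, modulo `p`, a nonzero multiple of `e_ν`, i.e. it lies on the
line `L_ν`. -/
def OfColour (p ν : ℕ) (a b : ℤ) : Prop :=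
  ∃ c : ℤ, ¬ (p : ℤ) ∣ c ∧
    (p : ℤ) ∣ a - c * (eLow ν).1 ∧ (p : ℤ) ∣ b - c * (eLow ν).2

theorem stmt_13 (p γ n ν : ℕ) (hp : p.Prime) (hodd : Odd p) (hγ : 1 ≤ γ)
    (hν : ν ≤ p) (hn : p ^ γ + p ^ (γ - 1) - 1 ≤ n)
    (a b : Fin n → ℤ) (hcol : ∀ i, OfColour p ν (a i) (b i)) :
    ∃ K : Finset (Fin n), K.Nonempty ∧
      (p : ℤ) ^ γ ∣ ∑ i ∈ K, a i ∧ (p : ℤ) ^ γ ∣ ∑ i ∈ K, b i := by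
  have hpp : (p : ℤ) ^ γ = p * (p : ℤ) ^ (γ - 1) := by
    conv_lhs => rw [show γ = (γ - 1) + 1 by omega]
    rw [pow_succ]
    ring
  rcases Nat.eq_zero_or_pos ν with hν0 | hνpos
  · -- ν = 0 : here p ∣ b i for all i
    have hbd : ∀ i, ∃ d : ℤ, b i = p * d := by
      intro i
      obtain ⟨c, -, -, h2⟩ := hcol i
      have : (p : ℤ) ∣ b i := by simpa [eLow, hν0] using h2
      exact this
    choose d hd using hbd
    obtain ⟨K, hK, hx, hy⟩ := davenport_aux p γ (γ - 1) hp hn a d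
    refine ⟨K, hK, hx, ?_⟩
    have hsum : ∑ i ∈ K, b i = (p : ℤ) * ∑ i ∈ K, d i := by
      rw [Finset.mul_sum]
      exact Finset.sum_congr rfl fun i _ => hd i
    rw [hsum, hpp]
    exact mul_dvd_mul_left _ hy
  · -- ν ≥ 1 : here p ∣ a i - ν * b i for all i
    have had : ∀ i, ∃ d : ℤ, a i - (ν : ℤ) * b i = p * d := by
      intro i
      obtain ⟨c, -, h1, h2⟩ := hcol i
      simp only [eLow, if_neg hνpos.ne'] at h1 h2
      have : (p : ℤ) ∣ a i - (ν : ℤ) * b i := by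
        have heq : a i - (ν : ℤ) * b i = (a i - c * (ν : ℤ)) - (ν : ℤ) * (b i - c * 1) := by
          ring
        rw [heq]
        exact dvd_sub h1 (h2.mul_left _)
      exact this
    choose d hd using had
    obtain ⟨K, hK, hx, hy⟩ := davenport_aux p γ (γ - 1) hp hn b d
    refine ⟨K, hK, ?_, hx⟩
    have hsum : ∑ i ∈ K, a i = (ν : ℤ) * ∑ i ∈ K, b i + (p : ℤ) * ∑ i ∈ K, d i := by
      rw [Finset.mul_sum, Finset.mul_sum, ← Finset.sum_add_distrib]
      refine Finset.sum_congr rfl fun i _ => ?_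
      have := hd i
      linarith
    rw [hsum]
    refine dvd_add (hx.mul_left _) ?_
    rw [hpp]
    exact mul_dvd_mul_left _ hy
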